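/- Let p be a prime and f(x) = p·x² + b·x + c with b, c ∈ ℤ such that D = b² - 4pc is a nonzero perfect square. Then λ(f(n)) changes sign infinitely often; that is, there are infinitely many positive integers n with λ(f(n)) = 1 and infinitely many with λ(f(n)) = -1. -/

import Mathlib

/-- The Liouville function `λ(n) = (-1)^Ω(n)`. -/
def liouville (n : ℕ) : ℤ := (-1) ^ (ArithmeticFunction.cardFactors n)

namespace PQCSAux


/-- Integer-argument version of the Liouville function. -/
def L (x : ℤ) : ℤ := liouville x.toNat

lemma L_pm (x : ℤ) : L x = 1 ∨ L x = -1 := by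
  unfold L liouville
  rcases Nat.even_or_odd (ArithmeticFunction.cardFactors x.toNat) with h | h
  · exact Or.inl (Even.neg_one_pow h)
  · exact Or.inr (Odd.neg_one_pow h)

lemma L_sq (x : ℤ) : L x * L x = 1 := by
  rcases L_pm x with h | h <;> rw [h] <;> norm_num

lemma L_mul {x y : ℤ} (hx : 0 < x) (hy : 0 < y) : L (x * y) = L x * L y := by
  obtain ⟨m, rfl⟩ : ∃ m : ℕ, x = (m : ℤ) := ⟨x.toNat, (Int.toNat_of_nonneg hx.le).symm⟩
  obtain ⟨n, rfl⟩ : ∃ n : ℕ, y = (n : ℤ) := ⟨y.toNat, (Int.toNat_of_nonneg hy.le).symm⟩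
  have hm : m ≠ 0 := by exact_mod_cast hx.ne'
  have hn : n ≠ 0 := by exact_mod_cast hy.ne'
  unfold L liouville
  rw [← Nat.cast_mul, Int.toNat_natCast, Int.toNat_natCast, Int.toNat_natCast,
    ArithmeticFunction.cardFactors_mul hm hn, pow_add]

lemma L_five : L 5 = -1 := by
  have h5 : (5 : ℤ).toNat = 5 := rfl
  unfold L liouville
  rw [h5, ArithmeticFunction.cardFactors_apply_prime (by norm_num : Nat.Prime 5), pow_one]


/-- Core: the Liouville function of `z (P z + ε)` cannot be eventually constant. -/
theorem core (P ε v Z : ℤ) (hP : 1 ≤ P) (hε : ε = 1 ∨ ε = -1)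
    (hZP : P + 2 ≤ Z) (hZ2 : 2 ≤ Z)
    (hv : ∀ z, Z ≤ z → L (z * (P * z + ε)) = v) : False := by
  have hε1 : -1 ≤ ε := by rcases hε with h | h <;> simp [h]
  have hε2 : ε ≤ 1 := by rcases hε with h | h <;> simp [h]
  -- positivity helpers
  have posPx : ∀ M x : ℤ, 1 ≤ M → Z ≤ x → 0 < M * x + ε := by
    intro M x hM hx
    nlinarith [mul_nonneg (by linarith : (0:ℤ) ≤ M - 1) (by linarith : (0:ℤ) ≤ x)]
  have idxge : ∀ M x : ℤ, 1 ≤ M → Z ≤ x → Z ≤ (M + 1) * x + ε := by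
    intro M x hM hx
    nlinarith [mul_nonneg (by linarith : (0:ℤ) ≤ M - 1) (by linarith : (0:ℤ) ≤ x)]
  have mulge : ∀ M x : ℤ, 1 ≤ M → Z ≤ x → Z ≤ M * x := by
    intro M x hM hx
    nlinarith [mul_nonneg (by linarith : (0:ℤ) ≤ M - 1) (by linarith : (0:ℤ) ≤ x)]
  have hvpm : v = 1 ∨ v = -1 := by
    have h := hv Z le_rfl; rw [← h]; exact L_pm _
  have hvsq : v * v = 1 := by rcases hvpm with h | h <;> rw [h] <;> norm_num
  have hc₀sq : (v * L P) * (v * L P) = 1 := by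
    have h1 := L_sq P
    calc (v * L P) * (v * L P) = (v * v) * (L P * L P) := by ring
    _ = 1 := by rw [hvsq, h1]; norm_num
  have lam1 : ∀ z, Z ≤ z → L (P * z + ε) = v * L z := by
    intro z hz
    have h1 : L (z * (P * z + ε)) = L z * L (P * z + ε) :=
      L_mul (by linarith) (posPx P z hP hz)
    have h2 : L z * L (P * z + ε) = v := by rw [← h1]; exact hv z hz
    have h3 := L_sq z
    linear_combination L z * h2 - L (P * z + ε) * h3
  -- main bootstrapping: λ(M a + ε) = c₀ λ(M) λ(a) for all M ≥ P, a ≥ Z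
  have Pmain : ∀ M, P ≤ M → ∀ a, Z ≤ a → L (M * a + ε) = (v * L P) * (L M * L a) := by
    refine Int.le_induction ?_ ?_
    · intro a ha
      have h := lam1 a ha
      have hsP := L_sq P
      rw [h]
      linear_combination (-(v * L a)) * hsP
    · intro M hM IH a ha
      have hM1 : 1 ≤ M := by linarith
      have key4 : ∀ s, Z ≤ s →
          L ((M + 1) * a + ε) * L s = L a * L ((M + 1) * s + ε) := by
        intro s hs
        have hTs : Z ≤ (M + 1) * s + ε := idxge M s hM1 hs
        have hTa : Z ≤ (M + 1) * a + ε := idxge M a hM1 ha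
        have p1 : 0 < M * a + ε := posPx M a hM1 ha
        have p2 : 0 < M * ((M + 1) * s + ε) + ε := posPx M _ hM1 hTs
        have p3 : 0 < M * ((M + 1) * a + ε) + ε := posPx M _ hM1 hTa
        have p4 : 0 < M * s + ε := posPx M s hM1 hs
        have e1 := L_mul p1 p2
        have e2 := L_mul p3 p4
        have eq0 : (M * a + ε) * (M * ((M + 1) * s + ε) + ε)
            = (M * ((M + 1) * a + ε) + ε) * (M * s + ε) := by ring
        have E : L (M * a + ε) * L (M * ((M + 1) * s + ε) + ε)
            = L (M * ((M + 1) * a + ε) + ε) * L (M * s + ε) := by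
          rw [← e1, ← e2, eq0]
        rw [IH a ha, IH _ hTs, IH _ hTa, IH s hs] at E
        have hLM := L_sq M
        linear_combination (-1 : ℤ) * E +
          (L a * L ((M + 1) * s + ε) - L ((M + 1) * a + ε) * L s) *
            ((v * L P) * (v * L P) * hLM + hc₀sq)
      have hsZ : Z ≤ M * Z := mulge M Z hM1 le_rfl
      have E := key4 (M * Z) hsZ
      have hidx : Z ≤ (M + 1) * Z := mulge (M + 1) Z (by linarith) le_rfl
      have earg : (M + 1) * (M * Z) + ε = M * ((M + 1) * Z) + ε := by ring
      rw [earg, IH _ hidx] at E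
      have m1 : L ((M + 1) * Z) = L (M + 1) * L Z := L_mul (by linarith) (by linarith)
      have m2 : L (M * Z) = L M * L Z := L_mul (by linarith) (by linarith)
      rw [m1, m2] at E
      have hLM := L_sq M
      have hLZ := L_sq Z
      linear_combination (L M * L Z) * E -
        (L ((M + 1) * a + ε) - (v * L P) * (L (M + 1) * L a)) *
          (L M * L M * hLZ + hLM)
  -- two-step relation
  have key3 : ∀ j, Z ≤ j → L j * L (j + 2) = v * L P := by
    intro j hj
    have hj2 : Z ≤ j + 2 := by linarith
    rcases hε with rfl | rfl
    · have h := Pmain j (by linarith) (j + 2) hj2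
      have e : j * (j + 2) + 1 = (j + 1) * (j + 1) := by ring
      rw [e] at h
      have hsq : L ((j + 1) * (j + 1)) = L (j + 1) * L (j + 1) :=
        L_mul (by linarith) (by linarith)
      rw [hsq, L_sq (j + 1)] at h
      linear_combination (-(v * L P)) * h - (L j * L (j + 2)) * hc₀sq
    · have h := Pmain (j + 1) (by linarith) (j + 1) (by linarith)
      have e : (j + 1) * (j + 1) + (-1) = j * (j + 2) := by ring
      rw [e] at h
      have hm : L (j * (j + 2)) = L j * L (j + 2) := L_mul (by linarith) (by linarith)
      rw [hm, L_sq (j + 1)] at h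
      rw [h]; ring
  -- iterate
  have iter : ∀ t : ℕ, ∀ j, Z ≤ j → L (j + 2 * (t : ℤ)) = (v * L P) ^ t * L j := by
    intro t
    induction t with
    | zero => intro j hj; simp
    | succ n IHt =>
      intro j hj
      have h1 : L (j + 2) = (v * L P) * L j := by
        have h := key3 j hj
        have hsj := L_sq j
        linear_combination L j * h - L (j + 2) * hsj
      have e : j + 2 * ((n : ℤ) + 1) = (j + 2) + 2 * (n : ℤ) := by ring
      push_cast
      rw [e, IHt (j + 2) (by linarith), h1, pow_succ]
      ring
  -- conclude
  have h5Z := iter (2 * Z.toNat) Z le_rfl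
  have harg : Z + 2 * ((2 * Z.toNat : ℕ) : ℤ) = 5 * Z := by omega
  have hpow : (v * L P) ^ (2 * Z.toNat) = 1 := by
    rw [pow_mul, show (v * L P) ^ 2 = 1 from by rw [pow_two]; exact hc₀sq, one_pow]
  rw [harg, hpow, one_mul] at h5Z
  have hmul : L (5 * Z) = L 5 * L Z := L_mul (by norm_num) (by linarith)
  rw [hmul, L_five] at h5Z
  rcases L_pm Z with h | h <;> rw [h] at h5Z <;> norm_num at h5Z

end PQCSAux

open PQCSAux in
/-- For a prime `p` and `f(x) = p x² + b x + c` whose discriminant `D = b² - 4pc` is a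
nonzero perfect square, `λ(f(n))` changes sign infinitely often. -/

theorem prime_quadratic_changes_sign (p : ℕ) (hp : p.Prime) (b c : ℤ)
    (h : ∃ q : ℤ, 1 ≤ q ∧ b ^ 2 - 4 * p * c = q ^ 2) :
    {n : ℤ | 0 < n ∧ liouville ((p : ℤ) * n ^ 2 + b * n + c).toNat = 1}.Infinite ∧
      {n : ℤ | 0 < n ∧ liouville ((p : ℤ) * n ^ 2 + b * n + c).toNat = -1}.Infinite := by
  obtain ⟨q, hq1, hq⟩ := h
  have hp2 : 2 ≤ (p : ℤ) := by exact_mod_cast hp.two_le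
  have hfac : (b - q) * (b + q) = 4 * (p : ℤ) * c := by linear_combination hq
  have heven : Even (b - q) ∧ Even (b + q) := by
    have hevenprod : Even ((b - q) * (b + q)) :=
      ⟨2 * (p : ℤ) * c, by linear_combination hfac⟩
    rcases Int.even_mul.mp hevenprod with h1 | h1
    · obtain ⟨k, hk⟩ := h1
      exact ⟨⟨k, hk⟩, ⟨k + q, by omega⟩⟩
    · obtain ⟨k, hk⟩ := h1
      exact ⟨⟨k - q, by omega⟩, ⟨k, hk⟩⟩
  obtain ⟨ε, hεpm, hdvd⟩ : ∃ ε : ℤ, (ε = 1 ∨ ε = -1) ∧ (2 * (p : ℤ)) ∣ (b - ε * q) := by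
    rcases hp.eq_two_or_odd' with hp2' | hodd
    · subst hp2'
      obtain ⟨s, hs⟩ := heven.1
      obtain ⟨t, ht⟩ := heven.2
      have h8 : (b - q) * (b + q) = 8 * c := by push_cast at hfac; linarith
      have h8' : (s + s) * (t + t) = 8 * c := by rw [← hs, ← ht]; exact h8
      have hst : s * t = 2 * c := by nlinarith [h8']
      have hev : Even (s * t) := ⟨c, by omega⟩
      rcases Int.even_mul.mp hev with ⟨u, hu⟩ | ⟨u, hu⟩
      · exact ⟨1, Or.inl rfl, ⟨u, by push_cast; omega⟩⟩
      · exact ⟨-1, Or.inr rfl, ⟨u, by push_cast; omega⟩⟩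
    · have hpdvd : (p : ℤ) ∣ (b - q) * (b + q) := ⟨4 * c, by linear_combination hfac⟩
      have hpZ : Prime (p : ℤ) := Nat.prime_iff_prime_int.mp hp
      obtain ⟨k, hk⟩ := hodd
      have hcop : IsCoprime (2 : ℤ) (p : ℤ) := ⟨-(k : ℤ), 1, by push_cast [hk]; ring⟩
      rcases (hpZ.dvd_mul.mp hpdvd) with hd | hd
      · refine ⟨1, Or.inl rfl, ?_⟩
        have h2 : (2 : ℤ) ∣ b - 1 * q := by rw [one_mul]; exact heven.1.two_dvd
        have hp' : (p : ℤ) ∣ b - 1 * q := by rw [one_mul]; exact hd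
        exact hcop.mul_dvd h2 hp'
      · refine ⟨-1, Or.inr rfl, ?_⟩
        have h2 : (2 : ℤ) ∣ b - (-1) * q := by
          rw [show b - (-1) * q = b + q by ring]; exact heven.2.two_dvd
        have hp' : (p : ℤ) ∣ b - (-1) * q := by
          rw [show b - (-1) * q = b + q by ring]; exact hd
        exact hcop.mul_dvd h2 hp'
  obtain ⟨A, hA⟩ := hdvd
  have hε2 : ε * ε = 1 := by rcases hεpm with rfl | rfl <;> norm_num
  have hevenr : Even (b + ε * q) := by
    rcases hεpm with rfl | rfl
    · simpa using heven.2
    · obtain ⟨k, hk⟩ := heven.1; exact ⟨k, by omega⟩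
  obtain ⟨B, hB⟩ := hevenr
  have hBpA : B + (p : ℤ) * A = b := by linarith
  have hAB : A * B = c := by
    have h4 : (4 * (p : ℤ)) * (A * B) = (4 * (p : ℤ)) * c := by
      have hx : (b - ε * q) * (b + ε * q) = 4 * (p : ℤ) * c := by
        have : (b - ε * q) * (b + ε * q) = b ^ 2 - (ε * ε) * q ^ 2 := by ring
        rw [this, hε2]; linear_combination hq
      calc (4 * (p : ℤ)) * (A * B) = (2 * (p : ℤ) * A) * (B + B) := by ring
      _ = (b - ε * q) * (b + ε * q) := by rw [← hA, ← hB]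
      _ = 4 * (p : ℤ) * c := hx
    have hne : (4 * (p : ℤ)) ≠ 0 := by positivity
    exact mul_left_cancel₀ hne h4
  have hident : ∀ n : ℤ, (p : ℤ) * n ^ 2 + b * n + c = (n + A) * ((p : ℤ) * n + B) := by
    intro n; linear_combination (-n) * hBpA + (-1 : ℤ) * hAB
  have hBA : B - (p : ℤ) * A = ε * q := by linarith
  -- main growth lemma
  have grow : ∀ v : ℤ, (v = 1 ∨ v = -1) → ∀ N : ℤ, ∃ n : ℤ, N < n ∧ 0 < n ∧
      liouville ((p : ℤ) * n ^ 2 + b * n + c).toNat = v := by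
    intro v hv N
    set Z : ℤ := (p : ℤ) + 3 + |A| + |N| with hZdef
    have habsA : (0 : ℤ) ≤ |A| := abs_nonneg A
    have habsN : (0 : ℤ) ≤ |N| := abs_nonneg N
    have hZP : (p : ℤ) + 2 ≤ Z := by simp only [hZdef]; linarith
    have hZ2 : 2 ≤ Z := by linarith
    have hattain : ∃ z, Z ≤ z ∧ L (z * ((p : ℤ) * z + ε)) = v := by
      by_contra hcon
      push_neg at hcon
      have hconst : ∀ z, Z ≤ z → L (z * ((p : ℤ) * z + ε)) = -v := by
        intro z hz
        rcases hv with rfl | rfl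
        · rcases L_pm (z * ((p : ℤ) * z + ε)) with h | h
          · exact absurd h (hcon z hz)
          · rw [h]
        · rcases L_pm (z * ((p : ℤ) * z + ε)) with h | h
          · rw [h]; norm_num
          · exact absurd h (hcon z hz)
      exact core (p : ℤ) ε (-v) Z (by linarith) hεpm hZP hZ2 hconst
    obtain ⟨z, hz, hLz⟩ := hattain
    have hz0 : 0 < z := by linarith
    have hqz : z ≤ q * z := le_mul_of_one_le_left hz0.le hq1
    have hAle : A ≤ |A| := le_abs_self A
    have hNle : N ≤ |N| := le_abs_self N
    refine ⟨q * z - A, by linarith, by linarith, ?_⟩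
    have hn : (p : ℤ) * (q * z - A) ^ 2 + b * (q * z - A) + c
        = (q * q) * (z * ((p : ℤ) * z + ε)) := by
      rw [hident (q * z - A)]
      linear_combination (q * z) * hBA
    have pospz : 0 < (p : ℤ) * z + ε := by
      rcases hεpm with rfl | rfl <;> nlinarith
    have posg : 0 < z * ((p : ℤ) * z + ε) := mul_pos hz0 pospz
    have posq : 0 < q := by linarith
    show L ((p : ℤ) * (q * z - A) ^ 2 + b * (q * z - A) + c) = v
    rw [hn, L_mul (mul_pos posq posq) posg, L_mul posq posq, L_sq q, one_mul]
    exact hLz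
  constructor
  · by_contra hfin
    rw [Set.not_infinite] at hfin
    obtain ⟨N, hN⟩ := hfin.bddAbove
    obtain ⟨n, hn1, hn2, hn3⟩ := grow 1 (Or.inl rfl) N
    have hle : n ≤ N := hN (Set.mem_setOf.mpr ⟨hn2, hn3⟩)
    linarith
  · by_contra hfin
    rw [Set.not_infinite] at hfin
    obtain ⟨N, hN⟩ := hfin.bddAbove
    obtain ⟨n, hn1, hn2, hn3⟩ := grow (-1) (Or.inr rfl) N
    have hle : n ≤ N := hN (Set.mem_setOf.mpr ⟨hn2, hn3⟩)
    linarith
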